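/- Let f : (0,∞) → ℝ be twice differentiable and let A be the general spherically symmetric flat SO(3)-connection determined by f. Then the curvature F_{μν}{}^k := ∂_μ A_ν{}^k − ∂_ν A_μ{}^k + Σ_{i,j} A_μ{}^i A_ν{}^j ε_{ijk} vanishes identically on ℝ³∖{0}: F_{μν}{}^k(x) = 0 for all x ≠ 0 and all μ, ν, k. -/

import Mathlib

/-- The totally antisymmetric Levi-Civita symbol on three indices, `eps 0 1 2 = 1`. -/
noncomputable def eps (i j k : Fin 3) : ℝ :=
  ((j : ℝ) - (i : ℝ)) * ((k : ℝ) - (i : ℝ)) * ((k : ℝ) - (j : ℝ)) / 2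

/-- The radius `r = |x|` of a point `x ∈ ℝ³`. -/
noncomputable def rad (x : Fin 3 → ℝ) : ℝ := Real.sqrt (∑ i, x i ^ 2)

/-- The partial derivative `∂_μ g` at `x`. -/
noncomputable def pd (g : (Fin 3 → ℝ) → ℝ) (μ : Fin 3) (x : Fin 3 → ℝ) : ℝ :=
  fderiv ℝ g x (Pi.single μ 1)

/-- The general spherically symmetric flat SO(3)-connection determined by `f`:
`A_μ{}^i = ε_{μij} x_j (cos f - 1)/r² + δ_μ^i sin f / r + x_μ x^i (r f' - sin f)/r³`. -/
noncomputable def Aconn (f : ℝ → ℝ) (x : Fin 3 → ℝ) (μ i : Fin 3) : ℝ :=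
  (∑ j, eps μ i j * x j) * (Real.cos (f (rad x)) - 1) / rad x ^ 2 +
  (if μ = i then (1 : ℝ) else 0) * Real.sin (f (rad x)) / rad x +
  x μ * x i * (rad x * deriv f (rad x) - Real.sin (f (rad x))) / rad x ^ 3

lemma rad_pos (x : Fin 3 → ℝ) (hx : x ≠ 0) : 0 < rad x := by
  obtain ⟨i, hi⟩ := Function.ne_iff.mp hx
  apply Real.sqrt_pos.mpr
  calc (0:ℝ) < x i ^ 2 := pow_two_pos_of_ne_zero hi
    _ ≤ ∑ j, x j ^ 2 := Finset.single_le_sum (f := fun j => x j ^ 2) (fun j _ => by positivity) (Finset.mem_univ i)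

lemma sq_rad (x : Fin 3 → ℝ) : rad x ^ 2 = ∑ i, x i ^ 2 :=
  Real.sq_sqrt (by positivity)

lemma hasFDerivAt_rad (x : Fin 3 → ℝ) (hx : x ≠ 0) :
    HasFDerivAt rad ((rad x)⁻¹ • (∑ i, x i • (ContinuousLinearMap.proj i : (Fin 3 → ℝ) →L[ℝ] ℝ))) x := by
  have hq : HasFDerivAt (fun y : Fin 3 → ℝ => ∑ i, y i ^ 2)
      (∑ i, (2 * x i) • (ContinuousLinearMap.proj i : (Fin 3 → ℝ) →L[ℝ] ℝ)) x := by
    apply HasFDerivAt.fun_sum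
    intro i _
    have h1 : HasFDerivAt (fun y : Fin 3 → ℝ => y i)
        (ContinuousLinearMap.proj i : (Fin 3 → ℝ) →L[ℝ] ℝ) x :=
      (ContinuousLinearMap.proj i : (Fin 3 → ℝ) →L[ℝ] ℝ).hasFDerivAt
    have heq : (fun y : Fin 3 → ℝ => y i ^ 2) = fun y => y i * y i := by
      funext y; ring
    rw [heq]
    refine (h1.mul h1).congr_fderiv ?_
    ext v
    simp [two_mul]
    ring
  have hpos : 0 < ∑ i, x i ^ 2 := by
    have := rad_pos x hx
    have h2 := sq_rad x
    nlinarith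
  have hs := (Real.hasDerivAt_sqrt (ne_of_gt hpos)).comp_hasFDerivAt x hq
  refine (hs : HasFDerivAt rad _ x).congr_fderiv ?_
  ext v
  simp only [rad, ContinuousLinearMap.smul_apply, ContinuousLinearMap.sum_apply,
    ContinuousLinearMap.proj_apply, smul_eq_mul]
  rw [Finset.mul_sum, Finset.mul_sum]
  exact Finset.sum_congr rfl (fun i _ => by field_simp)

noncomputable def Efun (f : ℝ → ℝ) (x : Fin 3 → ℝ) (ν k μ : Fin 3) : ℝ :=
  eps ν k μ * ((Real.cos (f (rad x)) - 1) / rad x ^ 2)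
  + (∑ j, eps ν k j * x j) *
      ((-Real.sin (f (rad x)) * deriv f (rad x) * rad x ^ 2
         - (Real.cos (f (rad x)) - 1) * (2 * rad x)) / (rad x ^ 2) ^ 2)
      * (x μ / rad x)
  + (if ν = k then (1:ℝ) else 0) *
      ((Real.cos (f (rad x)) * deriv f (rad x) * rad x - Real.sin (f (rad x))) / rad x ^ 2)
      * (x μ / rad x)
  + ((if ν = μ then (1:ℝ) else 0) * x k + x ν * (if k = μ then (1:ℝ) else 0)) *
      ((rad x * deriv f (rad x) - Real.sin (f (rad x))) / rad x ^ 3)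
  + x ν * x k *
      (((deriv f (rad x) + rad x * deriv (deriv f) (rad x)
          - Real.cos (f (rad x)) * deriv f (rad x)) * rad x ^ 3
        - (rad x * deriv f (rad x) - Real.sin (f (rad x))) * (3 * rad x ^ 2)) / (rad x ^ 3) ^ 2)
      * (x μ / rad x)

lemma pd_Aconn (f : ℝ → ℝ)
    (hf : ∀ r > 0, DifferentiableAt ℝ f r)
    (hf' : ∀ r > 0, DifferentiableAt ℝ (deriv f) r)
    (x : Fin 3 → ℝ) (hx : x ≠ 0) (ν k μ : Fin 3) :
    pd (fun y => Aconn f y ν k) μ x = Efun f x ν k μ := by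
  set r := rad x with hrdef
  have hr : 0 < r := rad_pos x hx
  have hr0 : r ≠ 0 := ne_of_gt hr
  set c := Real.cos (f r) with hcdef
  set s := Real.sin (f r) with hsdef
  set p := deriv f r with hpdef
  set q := deriv (deriv f) r with hqdef
  -- derivative of rad
  set D : (Fin 3 → ℝ) →L[ℝ] ℝ :=
    (r⁻¹ • (∑ i, x i • (ContinuousLinearMap.proj i : (Fin 3 → ℝ) →L[ℝ] ℝ))) with hDdef
  have hD : HasFDerivAt rad D x := hasFDerivAt_rad x hx
  have hDapp : D (Pi.single μ 1) = x μ / r := by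
    simp only [hDdef, ContinuousLinearMap.smul_apply, ContinuousLinearMap.coe_sum',
      Finset.sum_apply, ContinuousLinearMap.smul_apply, ContinuousLinearMap.proj_apply,
      smul_eq_mul]
    rw [Fin.sum_univ_three]
    fin_cases μ <;> simp <;> ring
  -- scalar derivatives
  have hfr : HasDerivAt f p r := (hf r hr).hasDerivAt
  have hfr' : HasDerivAt (deriv f) q r := (hf' r hr).hasDerivAt
  have hcos : HasDerivAt (fun t => Real.cos (f t)) (-s * p) r := by
    exact ((Real.hasDerivAt_cos (f r)).comp r hfr).congr_deriv (by ring)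
  have hsin : HasDerivAt (fun t => Real.sin (f t)) (c * p) r := by
    exact ((Real.hasDerivAt_sin (f r)).comp r hfr).congr_deriv (by ring)
  have hpow2 : HasDerivAt (fun t : ℝ => t ^ 2) (2 * r) r := by
    simpa using hasDerivAt_pow 2 r
  have hpow3 : HasDerivAt (fun t : ℝ => t ^ 3) (3 * r ^ 2) r := by
    simpa using hasDerivAt_pow 3 r
  have hC : HasDerivAt (fun t => (Real.cos (f t) - 1) / t ^ 2)
      ((-s * p * r ^ 2 - (c - 1) * (2 * r)) / (r ^ 2) ^ 2) r := by
    have := (hcos.sub_const 1).div hpow2 (by positivity)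
    exact this
  have hS : HasDerivAt (fun t => Real.sin (f t) / t)
      ((c * p * r - s) / r ^ 2) r := by
    have := hsin.div (hasDerivAt_id r) hr0
    refine this.congr_deriv ?_
    simp only [id_eq, mul_one, ← hsdef, sq]
  have hH : HasDerivAt (fun t => (t * deriv f t - Real.sin (f t)) / t ^ 3)
      (((p + r * q - c * p) * r ^ 3 - (r * p - s) * (3 * r ^ 2)) / (r ^ 3) ^ 2) r := by
    have hnum : HasDerivAt (fun t => t * deriv f t - Real.sin (f t)) (p + r * q - c * p) r := by
      have := ((hasDerivAt_id r).mul hfr').sub hsin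
      refine this.congr_deriv ?_
      simp only [id_eq]
      ring
    have := hnum.div hpow3 (by positivity)
    exact this
  -- lift to functions of y
  have hCx := hC.comp_hasFDerivAt x hD
  have hSx := hS.comp_hasFDerivAt x hD
  have hHx := hH.comp_hasFDerivAt x hD
  -- linear pieces
  set L : (Fin 3 → ℝ) →L[ℝ] ℝ :=
    (∑ j, eps ν k j • (ContinuousLinearMap.proj j : (Fin 3 → ℝ) →L[ℝ] ℝ)) with hLdef
  have hL : HasFDerivAt (fun y : Fin 3 → ℝ => ∑ j, eps ν k j * y j) L x := by
    apply HasFDerivAt.fun_sum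
    intro j _
    exact ((ContinuousLinearMap.proj j : (Fin 3 → ℝ) →L[ℝ] ℝ).hasFDerivAt).const_mul _
  have hLapp : L (Pi.single μ 1) = eps ν k μ := by
    simp only [hLdef, ContinuousLinearMap.coe_sum', Finset.sum_apply,
      ContinuousLinearMap.smul_apply, ContinuousLinearMap.proj_apply, smul_eq_mul]
    rw [Fin.sum_univ_three]
    fin_cases μ <;> simp
  have hprojν : HasFDerivAt (fun y : Fin 3 → ℝ => y ν)
      (ContinuousLinearMap.proj ν : (Fin 3 → ℝ) →L[ℝ] ℝ) x :=
    (ContinuousLinearMap.proj ν : (Fin 3 → ℝ) →L[ℝ] ℝ).hasFDerivAt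
  have hprojk : HasFDerivAt (fun y : Fin 3 → ℝ => y k)
      (ContinuousLinearMap.proj k : (Fin 3 → ℝ) →L[ℝ] ℝ) x :=
    (ContinuousLinearMap.proj k : (Fin 3 → ℝ) →L[ℝ] ℝ).hasFDerivAt
  have hT1 := hL.fun_mul hCx
  have hT2 := hSx.const_mul (if ν = k then (1:ℝ) else 0)
  have hT3 := (hprojν.fun_mul hprojk).fun_mul hHx
  have htot := (hT1.fun_add hT2).fun_add hT3
  have hA : (fun y => Aconn f y ν k) =
      (fun y => (∑ j, eps ν k j * y j) * (((fun t => (Real.cos (f t) - 1) / t ^ 2) ∘ rad) y) +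
        (if ν = k then (1:ℝ) else 0) * (((fun t => Real.sin (f t) / t) ∘ rad) y) +
        (y ν * y k) * (((fun t => (t * deriv f t - Real.sin (f t)) / t ^ 3) ∘ rad) y)) := by
    funext y
    simp only [Aconn, Function.comp_apply]
    ring
  rw [pd, hA, htot.fderiv]
  simp only [ContinuousLinearMap.add_apply, ContinuousLinearMap.smul_apply, hLapp, hDapp,
    ContinuousLinearMap.proj_apply, smul_eq_mul, Pi.single_apply, Function.comp_apply]
  simp only [Efun, ← hrdef, ← hcdef, ← hsdef, ← hpdef, ← hqdef]
  ring

lemma finv0 : (⟨0, by omega⟩ : Fin 3) = 0 := rfl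

lemma finv1 : (⟨1, by omega⟩ : Fin 3) = 1 := rfl

lemma finv2 : (⟨2, by omega⟩ : Fin 3) = 2 := rfl

set_option maxHeartbeats 4000000 in
/-- the curvature of the general spherically symmetric flat
SO(3)-connection determined by a twice differentiable `f` vanishes on `ℝ³ ∖ {0}`. -/
theorem stmt4 (f : ℝ → ℝ)
    (hf : ∀ r > 0, DifferentiableAt ℝ f r)
    (hf' : ∀ r > 0, DifferentiableAt ℝ (deriv f) r) :
    ∀ x : Fin 3 → ℝ, x ≠ 0 → ∀ μ ν k,
      pd (fun y => Aconn f y ν k) μ x - pd (fun y => Aconn f y μ k) ν x +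
        ∑ i, ∑ j, Aconn f x μ i * Aconn f x ν j * eps i j k = 0 := by
  intro x hx μ ν k
  rw [pd_Aconn f hf hf' x hx ν k μ, pd_Aconn f hf hf' x hx μ k ν]
  have hr : 0 < rad x := rad_pos x hx
  have hr0 : rad x ≠ 0 := ne_of_gt hr
  have hru : rad x * (rad x)⁻¹ = 1 := mul_inv_cancel₀ hr0
  have hr2 : rad x ^ 2 = x 0 ^ 2 + x 1 ^ 2 + x 2 ^ 2 := by
    rw [sq_rad]; exact Fin.sum_univ_three _
  have hsc : Real.sin (f (rad x)) ^ 2 + Real.cos (f (rad x)) ^ 2 = 1 :=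
    Real.sin_sq_add_cos_sq _
  set r := rad x with hrdef
  set c := Real.cos (f r) with hcdef
  set s := Real.sin (f r) with hsdef
  set p := deriv f r with hpdef
  set q := deriv (deriv f) r with hqdef
  simp only [Efun, Aconn, ← hrdef, ← hcdef, ← hsdef, ← hpdef, ← hqdef]
  fin_cases μ <;> fin_cases ν <;> fin_cases k <;>
    norm_num (config := { decide := true })
      [eps, Fin.sum_univ_three, Fin.isValue, Fin.reduceEq, finv0, finv1, finv2]
  · linear_combination (0:ℝ) * hru
  · linear_combination (0:ℝ) * hru
  · linear_combination (0:ℝ) * hru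
  · linear_combination (x 0 * x 2 * r * r⁻¹ ^ 5) * hsc + ((-1) * x 1 * r⁻¹ ^ 5 * s + x 1 * r⁻¹ ^ 5 * c * s + x 1 * r * r⁻¹ ^ 5 * p + (-1) * x 1 * r * r⁻¹ ^ 5 * c * p) * hr2 + (x 1 * r⁻¹ ^ 3 * s + (-1) * x 1 * r⁻¹ ^ 3 * c * s + (-1) * x 1 * r * r⁻¹ ^ 3 * p + x 1 * r * r⁻¹ ^ 3 * c * p + x 1 * r * r⁻¹ ^ 4 * s + (-1) * x 1 * r * r⁻¹ ^ 4 * c * s + (-1) * x 1 * r ^ 2 * r⁻¹ ^ 4 * p + x 1 * r ^ 2 * r⁻¹ ^ 4 * c * p + (-1) * x 0 * x 2 * r⁻¹ ^ 4 + (-1) * x 0 * x 2 * r⁻¹ ^ 4 * s ^ 2 + 2 * x 0 * x 2 * r⁻¹ ^ 4 * c + (-1) * x 0 * x 2 * r⁻¹ ^ 4 * c ^ 2 + x 0 * x 2 * r * r⁻¹ ^ 4 * s * p) * hru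
  · linear_combination (x 1 * x 2 * r * r⁻¹ ^ 5) * hsc + (x 0 * r⁻¹ ^ 5 * s + (-1) * x 0 * r⁻¹ ^ 5 * c * s + (-1) * x 0 * r * r⁻¹ ^ 5 * p + x 0 * r * r⁻¹ ^ 5 * c * p) * hr2 + ((-1) * x 1 * x 2 * r⁻¹ ^ 4 + (-1) * x 1 * x 2 * r⁻¹ ^ 4 * s ^ 2 + 2 * x 1 * x 2 * r⁻¹ ^ 4 * c + (-1) * x 1 * x 2 * r⁻¹ ^ 4 * c ^ 2 + x 1 * x 2 * r * r⁻¹ ^ 4 * s * p + (-1) * x 0 * r⁻¹ ^ 3 * s + x 0 * r⁻¹ ^ 3 * c * s + x 0 * r * r⁻¹ ^ 3 * p + (-1) * x 0 * r * r⁻¹ ^ 3 * c * p + (-1) * x 0 * r * r⁻¹ ^ 4 * s + x 0 * r * r⁻¹ ^ 4 * c * s + x 0 * r ^ 2 * r⁻¹ ^ 4 * p + (-1) * x 0 * r ^ 2 * r⁻¹ ^ 4 * c * p) * hru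
  · linear_combination ((x 2) ^ 2 * r * r⁻¹ ^ 5) * hsc + ((-2) * r * r⁻¹ ^ 5 + r * r⁻¹ ^ 5 * s ^ 2 + 2 * r * r⁻¹ ^ 5 * c) * hr2 + (2 * r⁻¹ ^ 2 + (-1) * r⁻¹ ^ 2 * s ^ 2 + (-2) * r⁻¹ ^ 2 * c + 2 * r * r⁻¹ ^ 3 + (-1) * r * r⁻¹ ^ 3 * s ^ 2 + (-2) * r * r⁻¹ ^ 3 * c + 2 * r ^ 2 * r⁻¹ ^ 4 + (-1) * r ^ 2 * r⁻¹ ^ 4 * s ^ 2 + (-2) * r ^ 2 * r⁻¹ ^ 4 * c + (-1) * (x 2) ^ 2 * r⁻¹ ^ 4 + 2 * (x 2) ^ 2 * r⁻¹ ^ 4 * c + (-1) * (x 2) ^ 2 * r⁻¹ ^ 4 * c ^ 2 + (x 1) ^ 2 * r⁻¹ ^ 4 * s ^ 2 + (-1) * (x 1) ^ 2 * r * r⁻¹ ^ 4 * s * p + (x 0) ^ 2 * r⁻¹ ^ 4 * s ^ 2 + (-1) * (x 0) ^ 2 * r * r⁻¹ ^ 4 * s * p) * hru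
  · linear_combination ((-1) * x 0 * x 1 * r * r⁻¹ ^ 5) * hsc + ((-1) * x 2 * r⁻¹ ^ 5 * s + x 2 * r⁻¹ ^ 5 * c * s + x 2 * r * r⁻¹ ^ 5 * p + (-1) * x 2 * r * r⁻¹ ^ 5 * c * p) * hr2 + (x 2 * r⁻¹ ^ 3 * s + (-1) * x 2 * r⁻¹ ^ 3 * c * s + (-1) * x 2 * r * r⁻¹ ^ 3 * p + x 2 * r * r⁻¹ ^ 3 * c * p + x 2 * r * r⁻¹ ^ 4 * s + (-1) * x 2 * r * r⁻¹ ^ 4 * c * s + (-1) * x 2 * r ^ 2 * r⁻¹ ^ 4 * p + x 2 * r ^ 2 * r⁻¹ ^ 4 * c * p + x 0 * x 1 * r⁻¹ ^ 4 + x 0 * x 1 * r⁻¹ ^ 4 * s ^ 2 + (-2) * x 0 * x 1 * r⁻¹ ^ 4 * c + x 0 * x 1 * r⁻¹ ^ 4 * c ^ 2 + (-1) * x 0 * x 1 * r * r⁻¹ ^ 4 * s * p) * hru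
  · linear_combination ((-1) * (x 1) ^ 2 * r * r⁻¹ ^ 5) * hsc + (2 * r * r⁻¹ ^ 5 + (-1) * r * r⁻¹ ^ 5 * s ^ 2 + (-2) * r * r⁻¹ ^ 5 * c) * hr2 + ((-2) * r⁻¹ ^ 2 + r⁻¹ ^ 2 * s ^ 2 + 2 * r⁻¹ ^ 2 * c + (-2) * r * r⁻¹ ^ 3 + r * r⁻¹ ^ 3 * s ^ 2 + 2 * r * r⁻¹ ^ 3 * c + (-2) * r ^ 2 * r⁻¹ ^ 4 + r ^ 2 * r⁻¹ ^ 4 * s ^ 2 + 2 * r ^ 2 * r⁻¹ ^ 4 * c + (-1) * (x 2) ^ 2 * r⁻¹ ^ 4 * s ^ 2 + (x 2) ^ 2 * r * r⁻¹ ^ 4 * s * p + (x 1) ^ 2 * r⁻¹ ^ 4 + (-2) * (x 1) ^ 2 * r⁻¹ ^ 4 * c + (x 1) ^ 2 * r⁻¹ ^ 4 * c ^ 2 + (-1) * (x 0) ^ 2 * r⁻¹ ^ 4 * s ^ 2 + (x 0) ^ 2 * r * r⁻¹ ^ 4 * s * p) * hru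
  · linear_combination ((-1) * x 1 * x 2 * r * r⁻¹ ^ 5) * hsc + (x 0 * r⁻¹ ^ 5 * s + (-1) * x 0 * r⁻¹ ^ 5 * c * s + (-1) * x 0 * r * r⁻¹ ^ 5 * p + x 0 * r * r⁻¹ ^ 5 * c * p) * hr2 + (x 1 * x 2 * r⁻¹ ^ 4 + x 1 * x 2 * r⁻¹ ^ 4 * s ^ 2 + (-2) * x 1 * x 2 * r⁻¹ ^ 4 * c + x 1 * x 2 * r⁻¹ ^ 4 * c ^ 2 + (-1) * x 1 * x 2 * r * r⁻¹ ^ 4 * s * p + (-1) * x 0 * r⁻¹ ^ 3 * s + x 0 * r⁻¹ ^ 3 * c * s + x 0 * r * r⁻¹ ^ 3 * p + (-1) * x 0 * r * r⁻¹ ^ 3 * c * p + (-1) * x 0 * r * r⁻¹ ^ 4 * s + x 0 * r * r⁻¹ ^ 4 * c * s + x 0 * r ^ 2 * r⁻¹ ^ 4 * p + (-1) * x 0 * r ^ 2 * r⁻¹ ^ 4 * c * p) * hru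
  · linear_combination ((-1) * x 0 * x 2 * r * r⁻¹ ^ 5) * hsc + (x 1 * r⁻¹ ^ 5 * s + (-1) * x 1 * r⁻¹ ^ 5 * c * s + (-1) * x 1 * r * r⁻¹ ^ 5 * p + x 1 * r * r⁻¹ ^ 5 * c * p) * hr2 + ((-1) * x 1 * r⁻¹ ^ 3 * s + x 1 * r⁻¹ ^ 3 * c * s + x 1 * r * r⁻¹ ^ 3 * p + (-1) * x 1 * r * r⁻¹ ^ 3 * c * p + (-1) * x 1 * r * r⁻¹ ^ 4 * s + x 1 * r * r⁻¹ ^ 4 * c * s + x 1 * r ^ 2 * r⁻¹ ^ 4 * p + (-1) * x 1 * r ^ 2 * r⁻¹ ^ 4 * c * p + x 0 * x 2 * r⁻¹ ^ 4 + x 0 * x 2 * r⁻¹ ^ 4 * s ^ 2 + (-2) * x 0 * x 2 * r⁻¹ ^ 4 * c + x 0 * x 2 * r⁻¹ ^ 4 * c ^ 2 + (-1) * x 0 * x 2 * r * r⁻¹ ^ 4 * s * p) * hru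
  · linear_combination ((-1) * x 1 * x 2 * r * r⁻¹ ^ 5) * hsc + ((-1) * x 0 * r⁻¹ ^ 5 * s + x 0 * r⁻¹ ^ 5 * c * s + x 0 * r * r⁻¹ ^ 5 * p + (-1) * x 0 * r * r⁻¹ ^ 5 * c * p) * hr2 + (x 1 * x 2 * r⁻¹ ^ 4 + x 1 * x 2 * r⁻¹ ^ 4 * s ^ 2 + (-2) * x 1 * x 2 * r⁻¹ ^ 4 * c + x 1 * x 2 * r⁻¹ ^ 4 * c ^ 2 + (-1) * x 1 * x 2 * r * r⁻¹ ^ 4 * s * p + x 0 * r⁻¹ ^ 3 * s + (-1) * x 0 * r⁻¹ ^ 3 * c * s + (-1) * x 0 * r * r⁻¹ ^ 3 * p + x 0 * r * r⁻¹ ^ 3 * c * p + x 0 * r * r⁻¹ ^ 4 * s + (-1) * x 0 * r * r⁻¹ ^ 4 * c * s + (-1) * x 0 * r ^ 2 * r⁻¹ ^ 4 * p + x 0 * r ^ 2 * r⁻¹ ^ 4 * c * p) * hru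
  · linear_combination ((-1) * (x 2) ^ 2 * r * r⁻¹ ^ 5) * hsc + (2 * r * r⁻¹ ^ 5 + (-1) * r * r⁻¹ ^ 5 * s ^ 2 + (-2) * r * r⁻¹ ^ 5 * c) * hr2 + ((-2) * r⁻¹ ^ 2 + r⁻¹ ^ 2 * s ^ 2 + 2 * r⁻¹ ^ 2 * c + (-2) * r * r⁻¹ ^ 3 + r * r⁻¹ ^ 3 * s ^ 2 + 2 * r * r⁻¹ ^ 3 * c + (-2) * r ^ 2 * r⁻¹ ^ 4 + r ^ 2 * r⁻¹ ^ 4 * s ^ 2 + 2 * r ^ 2 * r⁻¹ ^ 4 * c + (x 2) ^ 2 * r⁻¹ ^ 4 + (-2) * (x 2) ^ 2 * r⁻¹ ^ 4 * c + (x 2) ^ 2 * r⁻¹ ^ 4 * c ^ 2 + (-1) * (x 1) ^ 2 * r⁻¹ ^ 4 * s ^ 2 + (x 1) ^ 2 * r * r⁻¹ ^ 4 * s * p + (-1) * (x 0) ^ 2 * r⁻¹ ^ 4 * s ^ 2 + (x 0) ^ 2 * r * r⁻¹ ^ 4 * s * p) * hru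
  · linear_combination (0:ℝ) * hru
  · linear_combination (0:ℝ) * hru
  · linear_combination (0:ℝ) * hru
  · linear_combination ((x 0) ^ 2 * r * r⁻¹ ^ 5) * hsc + ((-2) * r * r⁻¹ ^ 5 + r * r⁻¹ ^ 5 * s ^ 2 + 2 * r * r⁻¹ ^ 5 * c) * hr2 + (2 * r⁻¹ ^ 2 + (-1) * r⁻¹ ^ 2 * s ^ 2 + (-2) * r⁻¹ ^ 2 * c + 2 * r * r⁻¹ ^ 3 + (-1) * r * r⁻¹ ^ 3 * s ^ 2 + (-2) * r * r⁻¹ ^ 3 * c + 2 * r ^ 2 * r⁻¹ ^ 4 + (-1) * r ^ 2 * r⁻¹ ^ 4 * s ^ 2 + (-2) * r ^ 2 * r⁻¹ ^ 4 * c + (x 2) ^ 2 * r⁻¹ ^ 4 * s ^ 2 + (-1) * (x 2) ^ 2 * r * r⁻¹ ^ 4 * s * p + (x 1) ^ 2 * r⁻¹ ^ 4 * s ^ 2 + (-1) * (x 1) ^ 2 * r * r⁻¹ ^ 4 * s * p + (-1) * (x 0) ^ 2 * r⁻¹ ^ 4 + 2 * (x 0) ^ 2 * r⁻¹ ^ 4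 * c + (-1) * (x 0) ^ 2 * r⁻¹ ^ 4 * c ^ 2) * hru
  · linear_combination (x 0 * x 1 * r * r⁻¹ ^ 5) * hsc + ((-1) * x 2 * r⁻¹ ^ 5 * s + x 2 * r⁻¹ ^ 5 * c * s + x 2 * r * r⁻¹ ^ 5 * p + (-1) * x 2 * r * r⁻¹ ^ 5 * c * p) * hr2 + (x 2 * r⁻¹ ^ 3 * s + (-1) * x 2 * r⁻¹ ^ 3 * c * s + (-1) * x 2 * r * r⁻¹ ^ 3 * p + x 2 * r * r⁻¹ ^ 3 * c * p + x 2 * r * r⁻¹ ^ 4 * s + (-1) * x 2 * r * r⁻¹ ^ 4 * c * s + (-1) * x 2 * r ^ 2 * r⁻¹ ^ 4 * p + x 2 * r ^ 2 * r⁻¹ ^ 4 * c * p + (-1) * x 0 * x 1 * r⁻¹ ^ 4 + (-1) * x 0 * x 1 * r⁻¹ ^ 4 * s ^ 2 + 2 * x 0 * x 1 * r⁻¹ ^ 4 * c + (-1) * x 0 * x 1 * r⁻¹ ^ 4 * c ^ 2 + x 0 * x 1 * r * r⁻¹ ^ 4 * s * p) * hru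
  · linear_combination (x 0 * x 2 * r * r⁻¹ ^ 5) * hsc + (x 1 * r⁻¹ ^ 5 * s + (-1) * x 1 * r⁻¹ ^ 5 * c * s + (-1) * x 1 * r * r⁻¹ ^ 5 * p + x 1 * r * r⁻¹ ^ 5 * c * p) * hr2 + ((-1) * x 1 * r⁻¹ ^ 3 * s + x 1 * r⁻¹ ^ 3 * c * s + x 1 * r * r⁻¹ ^ 3 * p + (-1) * x 1 * r * r⁻¹ ^ 3 * c * p + (-1) * x 1 * r * r⁻¹ ^ 4 * s + x 1 * r * r⁻¹ ^ 4 * c * s + x 1 * r ^ 2 * r⁻¹ ^ 4 * p + (-1) * x 1 * r ^ 2 * r⁻¹ ^ 4 * c * p + (-1) * x 0 * x 2 * r⁻¹ ^ 4 + (-1) * x 0 * x 2 * r⁻¹ ^ 4 * s ^ 2 + 2 * x 0 * x 2 * r⁻¹ ^ 4 * c + (-1) * x 0 * x 2 * r⁻¹ ^ 4 * c ^ 2 + x 0 * x 2 * r * r⁻¹ ^ 4 * s * p) * hru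
  · linear_combination (x 0 * x 1 * r * r⁻¹ ^ 5) * hsc + (x 2 * r⁻¹ ^ 5 * s + (-1) * x 2 * r⁻¹ ^ 5 * c * s + (-1) * x 2 * r * r⁻¹ ^ 5 * p + x 2 * r * r⁻¹ ^ 5 * c * p) * hr2 + ((-1) * x 2 * r⁻¹ ^ 3 * s + x 2 * r⁻¹ ^ 3 * c * s + x 2 * r * r⁻¹ ^ 3 * p + (-1) * x 2 * r * r⁻¹ ^ 3 * c * p + (-1) * x 2 * r * r⁻¹ ^ 4 * s + x 2 * r * r⁻¹ ^ 4 * c * s + x 2 * r ^ 2 * r⁻¹ ^ 4 * p + (-1) * x 2 * r ^ 2 * r⁻¹ ^ 4 * c * p + (-1) * x 0 * x 1 * r⁻¹ ^ 4 + (-1) * x 0 * x 1 * r⁻¹ ^ 4 * s ^ 2 + 2 * x 0 * x 1 * r⁻¹ ^ 4 * c + (-1) * x 0 * x 1 * r⁻¹ ^ 4 * c ^ 2 + x 0 * x 1 * r * r⁻¹ ^ 4 * s * p) * hru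
  · linear_combination ((x 1) ^ 2 * r * r⁻¹ ^ 5) * hsc + ((-2) * r * r⁻¹ ^ 5 + r * r⁻¹ ^ 5 * s ^ 2 + 2 * r * r⁻¹ ^ 5 * c) * hr2 + (2 * r⁻¹ ^ 2 + (-1) * r⁻¹ ^ 2 * s ^ 2 + (-2) * r⁻¹ ^ 2 * c + 2 * r * r⁻¹ ^ 3 + (-1) * r * r⁻¹ ^ 3 * s ^ 2 + (-2) * r * r⁻¹ ^ 3 * c + 2 * r ^ 2 * r⁻¹ ^ 4 + (-1) * r ^ 2 * r⁻¹ ^ 4 * s ^ 2 + (-2) * r ^ 2 * r⁻¹ ^ 4 * c + (x 2) ^ 2 * r⁻¹ ^ 4 * s ^ 2 + (-1) * (x 2) ^ 2 * r * r⁻¹ ^ 4 * s * p + (-1) * (x 1) ^ 2 * r⁻¹ ^ 4 + 2 * (x 1) ^ 2 * r⁻¹ ^ 4 * c + (-1) * (x 1) ^ 2 * r⁻¹ ^ 4 * c ^ 2 + (x 0) ^ 2 * r⁻¹ ^ 4 * s ^ 2 + (-1) * (x 0) ^ 2 * r * r⁻¹ ^ 4 * s * p) * hru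
  · linear_combination (x 1 * x 2 * r * r⁻¹ ^ 5) * hsc + ((-1) * x 0 * r⁻¹ ^ 5 * s + x 0 * r⁻¹ ^ 5 * c * s + x 0 * r * r⁻¹ ^ 5 * p + (-1) * x 0 * r * r⁻¹ ^ 5 * c * p) * hr2 + ((-1) * x 1 * x 2 * r⁻¹ ^ 4 + (-1) * x 1 * x 2 * r⁻¹ ^ 4 * s ^ 2 + 2 * x 1 * x 2 * r⁻¹ ^ 4 * c + (-1) * x 1 * x 2 * r⁻¹ ^ 4 * c ^ 2 + x 1 * x 2 * r * r⁻¹ ^ 4 * s * p + x 0 * r⁻¹ ^ 3 * s + (-1) * x 0 * r⁻¹ ^ 3 * c * s + (-1) * x 0 * r * r⁻¹ ^ 3 * p + x 0 * r * r⁻¹ ^ 3 * c * p + x 0 * r * r⁻¹ ^ 4 * s + (-1) * x 0 * r * r⁻¹ ^ 4 * c * s + (-1) * x 0 * r ^ 2 * r⁻¹ ^ 4 * p + x 0 * r ^ 2 * r⁻¹ ^ 4 * c * p) * hru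
  · linear_combination ((-1) * (x 0) ^ 2 * r * r⁻¹ ^ 5) * hsc + (2 * r * r⁻¹ ^ 5 + (-1) * r * r⁻¹ ^ 5 * s ^ 2 + (-2) * r * r⁻¹ ^ 5 * c) * hr2 + ((-2) * r⁻¹ ^ 2 + r⁻¹ ^ 2 * s ^ 2 + 2 * r⁻¹ ^ 2 * c + (-2) * r * r⁻¹ ^ 3 + r * r⁻¹ ^ 3 * s ^ 2 + 2 * r * r⁻¹ ^ 3 * c + (-2) * r ^ 2 * r⁻¹ ^ 4 + r ^ 2 * r⁻¹ ^ 4 * s ^ 2 + 2 * r ^ 2 * r⁻¹ ^ 4 * c + (-1) * (x 2) ^ 2 * r⁻¹ ^ 4 * s ^ 2 + (x 2) ^ 2 * r * r⁻¹ ^ 4 * s * p + (-1) * (x 1) ^ 2 * r⁻¹ ^ 4 * s ^ 2 + (x 1) ^ 2 * r * r⁻¹ ^ 4 * s * p + (x 0) ^ 2 * r⁻¹ ^ 4 + (-2) * (x 0) ^ 2 * r⁻¹ ^ 4 * c + (x 0) ^ 2 * r⁻¹ ^ 4 * c ^ 2) * hru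
  · linear_combination ((-1) * x 0 * x 1 * r * r⁻¹ ^ 5) * hsc + (x 2 * r⁻¹ ^ 5 * s + (-1) * x 2 * r⁻¹ ^ 5 * c * s + (-1) * x 2 * r * r⁻¹ ^ 5 * p + x 2 * r * r⁻¹ ^ 5 * c * p) * hr2 + ((-1) * x 2 * r⁻¹ ^ 3 * s + x 2 * r⁻¹ ^ 3 * c * s + x 2 * r * r⁻¹ ^ 3 * p + (-1) * x 2 * r * r⁻¹ ^ 3 * c * p + (-1) * x 2 * r * r⁻¹ ^ 4 * s + x 2 * r * r⁻¹ ^ 4 * c * s + x 2 * r ^ 2 * r⁻¹ ^ 4 * p + (-1) * x 2 * r ^ 2 * r⁻¹ ^ 4 * c * p + x 0 * x 1 * r⁻¹ ^ 4 + x 0 * x 1 * r⁻¹ ^ 4 * s ^ 2 + (-2) * x 0 * x 1 * r⁻¹ ^ 4 * c + x 0 * x 1 * r⁻¹ ^ 4 * c ^ 2 + (-1) * x 0 * x 1 * r * r⁻¹ ^ 4 * s * p) * hru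
  · linear_combination ((-1) * x 0 * x 2 * r * r⁻¹ ^ 5) * hsc + ((-1) * x 1 * r⁻¹ ^ 5 * s + x 1 * r⁻¹ ^ 5 * c * s + x 1 * r * r⁻¹ ^ 5 * p + (-1) * x 1 * r * r⁻¹ ^ 5 * c * p) * hr2 + (x 1 * r⁻¹ ^ 3 * s + (-1) * x 1 * r⁻¹ ^ 3 * c * s + (-1) * x 1 * r * r⁻¹ ^ 3 * p + x 1 * r * r⁻¹ ^ 3 * c * p + x 1 * r * r⁻¹ ^ 4 * s + (-1) * x 1 * r * r⁻¹ ^ 4 * c * s + (-1) * x 1 * r ^ 2 * r⁻¹ ^ 4 * p + x 1 * r ^ 2 * r⁻¹ ^ 4 * c * p + x 0 * x 2 * r⁻¹ ^ 4 + x 0 * x 2 * r⁻¹ ^ 4 * s ^ 2 + (-2) * x 0 * x 2 * r⁻¹ ^ 4 * c + x 0 * x 2 * r⁻¹ ^ 4 * c ^ 2 + (-1) * x 0 * x 2 * r * r⁻¹ ^ 4 * s * p) * hru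
  · linear_combination (0:ℝ) * hru
  · linear_combination (0:ℝ) * hru
  · linear_combination (0:ℝ) * hru
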